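/- Let E be a real inner product space that is a complete normed space, let λ > 0 and a ∈ E. The function u ↦ λ‖u‖ + (1/2)‖u − a‖² has a unique minimizer over E, equal to max(1 − λ/‖a‖, 0) · a when a ≠ 0, and equal to 0 when a = 0. -/

import Mathlib

open Classical

/-- Let `E` be a real inner ℝ product space that is a complete normed space, `λ > 0` and `a ∈ E`.
The function `u ↦ λ‖u‖ + (1/2)‖u − a‖²` has a unique minimizer over `E`, equal to
`max (1 − λ/‖a‖) 0 • a` when `a ≠ 0`, and `0` when `a = 0`. -/
theorem prox_l2_norm {E : Type*} [NormedAddCommGroup E] [InnerProductSpace ℝ E]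
    [CompleteSpace E] (lam : ℝ) (hlam : 0 < lam) (a : E) :
    let f : E → ℝ := fun u => lam * ‖u‖ + (1 / 2) * ‖u - a‖ ^ 2
    let p : E := if a = 0 then 0 else max (1 - lam / ‖a‖) 0 • a
    (∀ u, f p ≤ f u) ∧ (∀ u, (∀ w, f u ≤ f w) → u = p) := by
  intro f p
  -- variational inequality
  have hvi : ∀ u : E, lam * ‖p‖ + inner ℝ p (p - a) ≤ lam * ‖u‖ + (inner ℝ u (p - a) : ℝ) := by
    intro u
    by_cases ha : a = 0
    · simp [p, ha]
      positivity
    · have hna : 0 < ‖a‖ := norm_pos_iff.mpr ha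
      have hua : (inner ℝ u a : ℝ) ≤ ‖u‖ * ‖a‖ := real_inner_le_norm u a
      by_cases hle : ‖a‖ ≤ lam
      · have ht : max (1 - lam / ‖a‖) 0 = 0 := by
          apply max_eq_right
          have : lam / ‖a‖ ≥ 1 := (one_le_div hna).mpr hle
          linarith
        simp only [p, if_neg ha, ht, zero_smul]
        simp only [zero_sub, inner_zero_left, norm_zero, mul_zero, add_zero,
          inner_neg_right]
        have : ‖u‖ * ‖a‖ ≤ lam * ‖u‖ := by
          nlinarith [norm_nonneg u]
        linarith
      · push_neg at hle
        obtain ⟨t, htdef⟩ : ∃ t : ℝ, t = 1 - lam / ‖a‖ := ⟨_, rfl⟩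
        have ht0 : 0 < t := by
          have : lam / ‖a‖ < 1 := (div_lt_one hna).mpr hle
          rw [htdef]; linarith
        have hmax : max (1 - lam / ‖a‖) 0 = t := by rw [← htdef]; exact max_eq_left ht0.le
        have hp : p = t • a := by simp only [p, if_neg ha, hmax]
        have hpa : p - a = (t - 1) • a := by rw [hp, sub_smul, one_smul]
        have hnp : ‖p‖ = t * ‖a‖ := by
          rw [hp, norm_smul, Real.norm_eq_abs, abs_of_pos ht0]
        have hiu : (inner ℝ u (p - a) : ℝ) = (t - 1) * inner ℝ u a := by
          rw [hpa, real_inner_smul_right]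
        have hip : (inner ℝ p (p - a) : ℝ) = t * (t - 1) * (‖a‖ * ‖a‖) := by
          rw [hpa, hp, real_inner_smul_left, real_inner_smul_right,
            real_inner_self_eq_norm_mul_norm]; ring
        have ht1 : t - 1 = -(lam / ‖a‖) := by rw [htdef]; ring
        rw [hnp, hip, hiu, ht1]
        have hkey : t * ((lam / ‖a‖) * (‖a‖ * ‖a‖)) = t * (lam * ‖a‖) := by
          congr 1
          field_simp
        have h2 : -(lam / ‖a‖) * (inner ℝ u a : ℝ) ≥ -(lam / ‖a‖) * (‖u‖ * ‖a‖) := by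
          have hnn : 0 ≤ lam / ‖a‖ := by positivity
          nlinarith
        have h3 : (lam / ‖a‖) * (‖u‖ * ‖a‖) = lam * ‖u‖ := by
          field_simp
        linarith [hkey, h2, h3]
  -- strong inequality
  have hstrong : ∀ u : E, f p + (1/2) * ‖u - p‖ ^ 2 ≤ f u := by
    intro u
    have hexp : ‖u - a‖ ^ 2 = ‖u - p‖ ^ 2 + 2 * (inner ℝ (u - p) (p - a) : ℝ)
        + ‖p - a‖ ^ 2 := by
      have := norm_add_sq_real (u - p) (p - a)
      rw [sub_add_sub_cancel] at this
      exact this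
    have hinner : (inner ℝ (u - p) (p - a) : ℝ) = inner ℝ u (p - a) - inner ℝ p (p - a) := by
      rw [inner_sub_left]
    have := hvi u
    simp only [f]
    rw [hexp, hinner]
    linarith
  clear_value f p
  constructor
  · intro u
    have := hstrong u
    have hn : 0 ≤ (1/2) * ‖u - p‖ ^ 2 := by positivity
    linarith
  · intro u hu
    have h1 := hstrong u
    have h2 := hu p
    have hsq : ‖u - p‖ ^ 2 ≤ 0 := by linarith
    have : ‖u - p‖ = 0 := by nlinarith [norm_nonneg (u - p)]
    have : u - p = 0 := norm_eq_zero.mp this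
    exact sub_eq_zero.mp this
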